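/- Let 1 < a < 2 and M > 1 with 3/(2−a) ≤ log₂(8M). Then for every nonempty spin-flip collection γ, 𝒩(γ) ≤ c(M,a)·𝒩'(γ), where c(M,a) = 6·(2a/(a−1))^{log_a 2} · ζ(log_a 2) · (log₂(8M))^{log_a 2} and ζ is the Riemann zeta function (note log_a 2 > 1 since a < 2). -/

import Mathlib

noncomputable section
open scoped Classical

/-! An integer `k : ℤ` encodes the dual-lattice site (spin flip) `k + 1/2 ∈ ℤ + 1/2`. -/

/-- Auxiliary greedy construction of the canonical cover (with fuel). -/
def coverAux (n : ℕ) : ℕ → Finset ℤ → Finset ℤ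
  | 0, _ => ∅
  | fuel + 1, γ =>
    if h : γ.Nonempty then
      insert (γ.min' h) (coverAux n fuel (γ.filter fun x => γ.min' h + 2 ^ n ≤ x))
    else ∅

/-- The left endpoints of the intervals of the canonical greedy cover `𝒾ₙ(γ)` of `γ` by
open intervals of diameter `2^n` with integer endpoints: `u` encodes `(u, u + 2^n)`. -/
def cover (n : ℕ) (γ : Finset ℤ) : Finset ℤ := coverAux n γ.card γ

lemma coverAux_nil (n f : ℕ) : coverAux n f ∅ = ∅ := by
  cases f <;> simp [coverAux]

lemma filter_min_card_lt {γ : Finset ℤ} (h : γ.Nonempty) (n : ℕ) :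
    (γ.filter fun x => γ.min' h + 2 ^ n ≤ x).card < γ.card := by
  apply Finset.card_lt_card
  rw [Finset.filter_ssubset]
  exact ⟨γ.min' h, γ.min'_mem h, by
    simp only [not_le]
    nlinarith [pow_pos (by norm_num : (0:ℤ) < 2) n]⟩

lemma coverAux_fuel (n : ℕ) : ∀ k f₁ f₂ (γ : Finset ℤ), γ.card ≤ k → k ≤ f₁ → k ≤ f₂ →
    coverAux n f₁ γ = coverAux n f₂ γ := by
  intro k
  induction k with
  | zero =>
    intro f₁ f₂ γ hγ _ _
    have : γ = ∅ := Finset.card_eq_zero.mp (Nat.le_zero.mp hγ)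
    subst this; rw [coverAux_nil, coverAux_nil]
  | succ k ih =>
    intro f₁ f₂ γ hγ h1 h2
    rcases γ.eq_empty_or_nonempty with rfl | hne
    · rw [coverAux_nil, coverAux_nil]
    · have hc : 1 ≤ γ.card := Finset.card_pos.mpr hne
      obtain ⟨g₁, rfl⟩ : ∃ g, f₁ = g + 1 := ⟨f₁ - 1, by omega⟩
      obtain ⟨g₂, rfl⟩ : ∃ g, f₂ = g + 1 := ⟨f₂ - 1, by omega⟩
      simp only [coverAux, dif_pos hne]
      congr 1
      have hflt := filter_min_card_lt hne n
      exact ih g₁ g₂ _ (by omega) (by omega) (by omega)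

lemma cover_eq_insert {γ : Finset ℤ} (h : γ.Nonempty) (n : ℕ) :
    cover n γ = insert (γ.min' h) (cover n (γ.filter fun x => γ.min' h + 2 ^ n ≤ x)) := by
  have hc : 1 ≤ γ.card := Finset.card_pos.mpr h
  obtain ⟨c, hcc⟩ : ∃ c, γ.card = c + 1 := ⟨γ.card - 1, by omega⟩
  have hflt := filter_min_card_lt h n
  unfold cover
  rw [hcc]
  simp only [coverAux, dif_pos h]
  congr 1
  exact coverAux_fuel n (γ.filter fun x => γ.min' h + 2 ^ n ≤ x).card c _ _ le_rfl
    (by omega) le_rfl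

lemma cover_subset (n : ℕ) : ∀ k (γ : Finset ℤ), γ.card ≤ k → cover n γ ⊆ γ := by
  intro k
  induction k with
  | zero =>
    intro γ hγ
    have : γ = ∅ := Finset.card_eq_zero.mp (Nat.le_zero.mp hγ)
    subst this; simp [cover, coverAux_nil]
  | succ k ih =>
    intro γ hγ
    rcases γ.eq_empty_or_nonempty with rfl | hne
    · simp [cover, coverAux_nil]
    · rw [cover_eq_insert hne n]
      apply Finset.insert_subset (γ.min'_mem hne)
      have := filter_min_card_lt hne n
      exact (ih _ (by omega)).trans (Finset.filter_subset _ _)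

lemma cover_covers (n : ℕ) : ∀ k (γ : Finset ℤ), γ.card ≤ k →
    ∀ x ∈ γ, ∃ u ∈ cover n γ, u ≤ x ∧ x < u + 2 ^ n := by
  intro k
  induction k with
  | zero =>
    intro γ hγ
    have : γ = ∅ := Finset.card_eq_zero.mp (Nat.le_zero.mp hγ)
    subst this; simp
  | succ k ih =>
    intro γ hγ x hx
    have hne : γ.Nonempty := ⟨x, hx⟩
    rw [cover_eq_insert hne n]
    by_cases hcut : γ.min' hne + 2 ^ n ≤ x
    · obtain ⟨u, hu, h1, h2⟩ := ih _ (Nat.lt_succ_iff.mp (lt_of_lt_of_le (filter_min_card_lt hne n) hγ)) x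
        (Finset.mem_filter.mpr ⟨hx, hcut⟩)
      exact ⟨u, Finset.mem_insert_of_mem hu, h1, h2⟩
    · exact ⟨γ.min' hne, Finset.mem_insert_self _ _, γ.min'_le x hx, by omega⟩

lemma cover_nonempty {γ : Finset ℤ} (h : γ.Nonempty) (n : ℕ) : (cover n γ).Nonempty := by
  rw [cover_eq_insert h n]; exact Finset.insert_nonempty _ _

/-- Minimality of the greedy cover. -/
lemma cover_card_le (n : ℕ) : ∀ k (γ : Finset ℤ), γ.card ≤ k → ∀ T : Finset ℤ,
    (∀ x ∈ γ, ∃ t ∈ T, t ≤ x ∧ x < t + 2 ^ n) → (cover n γ).card ≤ T.card := by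
  intro k
  induction k with
  | zero =>
    intro γ hγ T _
    have : γ = ∅ := Finset.card_eq_zero.mp (Nat.le_zero.mp hγ)
    subst this; simp [cover, coverAux_nil]
  | succ k ih =>
    intro γ hγ T hT
    rcases γ.eq_empty_or_nonempty with rfl | hne
    · simp [cover, coverAux_nil]
    · obtain ⟨t0, ht0, ht0le, ht0lt⟩ := hT (γ.min' hne) (γ.min'_mem hne)
      have hflt := filter_min_card_lt hne n
      have hcov' : ∀ x ∈ γ.filter fun x => γ.min' hne + 2 ^ n ≤ x,
          ∃ t ∈ T.erase t0, t ≤ x ∧ x < t + 2 ^ n := by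
        intro x hx
        obtain ⟨hxγ, hxcut⟩ := Finset.mem_filter.mp hx
        obtain ⟨t, ht, h1, h2⟩ := hT x hxγ
        refine ⟨t, Finset.mem_erase.mpr ⟨?_, ht⟩, h1, h2⟩
        rintro rfl
        omega
      have hrec := ih _ (Nat.lt_succ_iff.mp (lt_of_lt_of_le hflt hγ)) (T.erase t0) hcov'
      rw [cover_eq_insert hne n]
      have hT1 : 1 ≤ T.card := Finset.card_pos.mpr ⟨t0, ht0⟩
      calc (insert (γ.min' hne) (cover n (γ.filter fun x => γ.min' hne + 2 ^ n ≤ x))).card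
          ≤ (cover n (γ.filter fun x => γ.min' hne + 2 ^ n ≤ x)).card + 1 := Finset.card_insert_le _ _
        _ ≤ (T.erase t0).card + 1 := by omega
        _ = T.card := by rw [Finset.card_erase_of_mem ht0]; omega


/-- The diameter of `γ` (as a subset of `ℤ + 1/2`). -/
def diamZ (γ : Finset ℤ) : ℤ := WithBot.unbotD 0 γ.max - WithTop.untopD 0 γ.min

/-- `n₀(γ) = ⌊log₂ diam γ⌋`. -/
def n0 (γ : Finset ℤ) : ℕ := Nat.log 2 (diamZ γ).toNat

/-- The cover size `𝒩(γ) = ∑_{n=0}^{n₀(γ)} |𝒾ₙ(γ)|`. -/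
def coverSize (γ : Finset ℤ) : ℕ := ∑ n ∈ Finset.range (n0 γ + 1), (cover n γ).card

/-- The isolated intervals `𝒾'ₙ(γ)`. -/
def isoCover (M a : ℝ) (n : ℕ) (γ : Finset ℤ) : Finset ℤ :=
  (cover n γ).filter fun u => ∀ u' ∈ cover n γ, u' ≠ u →
    2 * M * (2 : ℝ) ^ (a * n) ≤ |(u : ℝ) - (u' : ℝ)| - 2 ^ n

/-- The isolated cover size `𝒩'(γ) = |γ| + ∑_{n=1}^{n₀(γ)} |𝒾'ₙ(γ)|`. -/
def isoCoverSize (M a : ℝ) (γ : Finset ℤ) : ℕ :=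
  γ.card + ∑ n ∈ Finset.Icc 1 (n0 γ), (isoCover M a n γ).card

/-- The Riemann zeta function for real `s > 1`, `ζ(s) = ∑_{n≥1} n^{-s}`. -/
def zetaR (s : ℝ) : ℝ := ∑' n : ℕ, 1 / ((n : ℝ) + 1) ^ s



lemma cover_card_le_card (n : ℕ) (γ : Finset ℤ) : (cover n γ).card ≤ γ.card :=
  Finset.card_le_card (cover_subset n γ.card γ le_rfl)

lemma cover_card_pos {γ : Finset ℤ} (h : γ.Nonempty) (n : ℕ) : 1 ≤ (cover n γ).card :=
  Finset.card_pos.mpr (cover_nonempty h n)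

lemma cover_card_antitone {n m : ℕ} (h : n ≤ m) (γ : Finset ℤ) :
    (cover m γ).card ≤ (cover n γ).card := by
  apply cover_card_le m γ.card γ le_rfl
  intro x hx
  obtain ⟨u, hu, h1, h2⟩ := cover_covers n γ.card γ le_rfl x hx
  refine ⟨u, hu, h1, lt_of_lt_of_le h2 ?_⟩
  have : (2:ℤ) ^ n ≤ 2 ^ m := pow_le_pow_right₀ (by norm_num) h
  omega

lemma diamZ_eq {γ : Finset ℤ} (h : γ.Nonempty) : diamZ γ = γ.max' h - γ.min' h := by
  unfold diamZ
  rw [← Finset.coe_max' h, ← Finset.coe_min' h]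
  rfl

lemma cover_card_top {γ : Finset ℤ} (h : γ.Nonempty) {n : ℕ} (hn : n0 γ + 1 ≤ n) :
    (cover n γ).card = 1 := by
  have hd : diamZ γ = γ.max' h - γ.min' h := diamZ_eq h
  have hd0 : 0 ≤ diamZ γ := by
    rw [hd]
    have := γ.min'_le (γ.max' h) (γ.max'_mem h)
    omega
  have hlog : (diamZ γ).toNat < 2 ^ (n0 γ + 1) :=
    Nat.lt_pow_succ_log_self (by norm_num) _
  have hdlt : diamZ γ < (2:ℤ) ^ (n0 γ + 1) := by
    have : ((diamZ γ).toNat : ℤ) < ((2 ^ (n0 γ + 1) : ℕ) : ℤ) := by exact_mod_cast hlog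
    rw [Int.toNat_of_nonneg hd0] at this
    calc diamZ γ < ((2 ^ (n0 γ + 1) : ℕ) : ℤ) := this
      _ = (2:ℤ) ^ (n0 γ + 1) := by push_cast; ring
  have hle : (cover n γ).card ≤ 1 := by
    apply cover_card_le n γ.card γ le_rfl {γ.min' h}
    intro x hx
    refine ⟨γ.min' h, Finset.mem_singleton_self _, γ.min'_le x hx, ?_⟩
    have hxmax : x ≤ γ.max' h := γ.le_max' x hx
    have hpow : (2:ℤ) ^ (n0 γ + 1) ≤ 2 ^ n := pow_le_pow_right₀ (by norm_num) hn
    rw [hd] at hdlt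
    omega
  have := cover_card_pos h n
  omega


-- telescoping and Abel summation helpers
lemma tele_sum (g : ℕ → ℝ) {n K : ℕ} (h : n ≤ K) :
    ∑ j ∈ Finset.Ico n K, (g j - g (j + 1)) = g n - g K := by
  induction K, h using Nat.le_induction with
  | base => simp
  | succ K hK ih =>
    rw [Finset.sum_Ico_succ_top hK, ih]
    ring

lemma abel_sum (g : ℕ → ℝ) (K : ℕ) :
    ∑ j ∈ Finset.Icc 1 K, (j : ℝ) * (g j - g (j + 1)) =
      (∑ j ∈ Finset.Icc 1 K, g j) - K * g (K + 1) := by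
  induction K with
  | zero => simp
  | succ K ih =>
    rw [Finset.sum_Icc_succ_top (by omega : 1 ≤ K + 1),
        Finset.sum_Icc_succ_top (by omega : 1 ≤ K + 1), ih]
    push_cast
    ring


lemma merge_aux (e w : ℤ) (he : 0 < e) (d : ℝ) (hd : 0 ≤ d)
    (hw : 3 * (e : ℝ) + 2 * d ≤ (w : ℝ)) (Bad : ℤ → Prop) :
    ∀ k (C : Finset ℤ), C.card ≤ k → ∀ f : Bool,
      (∀ b ∈ C, Bad b → (∃ p ∈ C, p ≠ b ∧ |(b : ℝ) - (p : ℝ)| < (e : ℝ) + d) ∨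
        (f = true ∧ ∀ v ∈ C, b ≤ v)) →
      ∃ T : Finset ℤ, (∀ v ∈ C, ∃ t ∈ T, t ≤ v ∧ v + e ≤ t + w) ∧
        2 * T.card + (C.filter Bad).card ≤ 2 * C.card + (if f then 1 else 0) := by
  have hew : e ≤ w := by
    have : (e : ℝ) ≤ (w : ℝ) := by
      have h0 : (0:ℝ) < (e:ℝ) := by exact_mod_cast he
      linarith
    exact_mod_cast this
  have heR : (0:ℝ) < (e:ℝ) := by exact_mod_cast he
  intro k
  induction k with
  | zero =>
    intro C hC f _
    have : C = ∅ := Finset.card_eq_zero.mp (Nat.le_zero.mp hC)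
    subst this
    exact ⟨∅, by simp, by simp⟩
  | succ k ih =>
    intro C hC f Hyp
    rcases C.eq_empty_or_nonempty with rfl | hCne
    · exact ⟨∅, by simp, by simp⟩
    have hu1C := C.min'_mem hCne
    set u1 := C.min' hCne with hu1def
    have hmin : ∀ v ∈ C, u1 ≤ v := fun v hv => C.min'_le v hv
    have hcard1 : 1 ≤ C.card := Finset.card_pos.mpr hCne
    by_cases hP : ∃ p ∈ C, p ≠ u1 ∧ |(u1 : ℝ) - (p : ℝ)| < (e : ℝ) + d
    case neg =>
      -- isolated minimum: consume u1 alone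
      set C' := C.erase u1 with hC'def
      have hcard' : C.card = C'.card + 1 := by
        rw [hC'def, Finset.card_erase_of_mem hu1C]; omega
      have Hyp' : ∀ b ∈ C', Bad b → (∃ p ∈ C', p ≠ b ∧ |(b : ℝ) - (p : ℝ)| < (e : ℝ) + d) ∨
          (false = true ∧ ∀ v ∈ C', b ≤ v) := by
        intro b hb hBad
        have hbC : b ∈ C := Finset.mem_of_mem_erase hb
        have hbne : b ≠ u1 := Finset.ne_of_mem_erase hb
        rcases Hyp b hbC hBad with ⟨p, hpC, hpne, hpd⟩ | ⟨_, hbm⟩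
        · left
          have hpu1 : p ≠ u1 := by
            rintro rfl
            exact hP ⟨b, hbC, hbne, by rw [abs_sub_comm]; exact hpd⟩
          exact ⟨p, Finset.mem_erase.mpr ⟨hpu1, hpC⟩, hpne, hpd⟩
        · exact absurd (le_antisymm (hbm u1 hu1C) (hmin b hbC)) hbne
      obtain ⟨T', cov', cnt'⟩ := ih C' (by omega) false Hyp'
      have cnt'' : 2 * T'.card + (C'.filter Bad).card ≤ 2 * C'.card := by simpa using cnt'
      clear cnt'
      refine ⟨insert u1 T', ?_, ?_⟩
      · intro v hv
        by_cases hvu : v = u1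
        · refine ⟨u1, Finset.mem_insert_self _ _, hvu.ge, ?_⟩
          rw [hvu]
          omega
        · obtain ⟨t, ht, h1, h2⟩ := cov' v (Finset.mem_erase.mpr ⟨hvu, hv⟩)
          exact ⟨t, Finset.mem_insert_of_mem ht, h1, h2⟩
      · have hTcard : (insert u1 T').card ≤ T'.card + 1 := Finset.card_insert_le _ _
        by_cases hBu : Bad u1
        · have hf : f = true := by
            rcases Hyp u1 hu1C hBu with ⟨p, hpC, hpne, hpd⟩ | ⟨hf, _⟩
            · exact absurd ⟨p, hpC, hpne, hpd⟩ hP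
            · exact hf
          have hfil : (C.filter Bad).card ≤ (C'.filter Bad).card + 1 := by
            have hsub : C.filter Bad ⊆ insert u1 (C'.filter Bad) := by
              intro x hx
              obtain ⟨hxC, hxB⟩ := Finset.mem_filter.mp hx
              by_cases hxu : x = u1
              · exact hxu ▸ Finset.mem_insert_self _ _
              · exact Finset.mem_insert_of_mem
                  (Finset.mem_filter.mpr ⟨Finset.mem_erase.mpr ⟨hxu, hxC⟩, hxB⟩)
            calc (C.filter Bad).card ≤ (insert u1 (C'.filter Bad)).card :=
                  Finset.card_le_card hsub
              _ ≤ (C'.filter Bad).card + 1 := Finset.card_insert_le _ _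
          rw [hf]
          simp only [if_true]
          omega
        · have hfil : (C.filter Bad).card ≤ (C'.filter Bad).card := by
            apply Finset.card_le_card
            intro x hx
            obtain ⟨hxC, hxB⟩ := Finset.mem_filter.mp hx
            have hxu : x ≠ u1 := by rintro rfl; exact hBu hxB
            exact Finset.mem_filter.mpr ⟨Finset.mem_erase.mpr ⟨hxu, hxC⟩, hxB⟩
          have : 2 * (insert u1 T').card + (C.filter Bad).card ≤ 2 * C.card := by omega
          exact this.trans (Nat.le_add_right _ _)
    case pos =>
      obtain ⟨p, hpC, hpne, hpd⟩ := hP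
      have hpu1 : u1 < p := lt_of_le_of_ne (hmin p hpC) (Ne.symm hpne)
      set C1 := C.erase u1 with hC1def
      have hpC1 : p ∈ C1 := Finset.mem_erase.mpr ⟨hpne, hpC⟩
      have hC1ne : C1.Nonempty := ⟨p, hpC1⟩
      set u2 := C1.min' hC1ne with hu2def
      have hu2C1 : u2 ∈ C1 := C1.min'_mem hC1ne
      have hu2C : u2 ∈ C := Finset.mem_of_mem_erase hu2C1
      have h12 : u1 < u2 := lt_of_le_of_ne (hmin u2 hu2C) (Ne.symm (Finset.ne_of_mem_erase hu2C1))
      have hu2p : u2 ≤ p := C1.min'_le p hpC1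
      have h21d : (u2 : ℝ) - (u1 : ℝ) < (e : ℝ) + d := by
        have habs : |(u1 : ℝ) - (p : ℝ)| = (p : ℝ) - u1 := by
          rw [abs_sub_comm]
          exact abs_of_pos (by exact_mod_cast sub_pos.mpr hpu1)
        have : (u2 : ℝ) ≤ (p : ℝ) := by exact_mod_cast hu2p
        rw [habs] at hpd
        linarith
      have hC1card : C.card = C1.card + 1 := by
        rw [hC1def, Finset.card_erase_of_mem hu1C]; omega
      set C2 := C1.erase u2 with hC2def
      have hC1ins : insert u2 C2 = C1 := Finset.insert_erase hu2C1
      have hCins : insert u1 C1 = C := Finset.insert_erase hu1C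
      rcases C2.eq_empty_or_nonempty with hC2e | hC2ne
      · -- C = {u1, u2}
        have hC1eq : C1 = {u2} := by rw [← hC1ins, hC2e]; rfl
        have hCmem : ∀ v ∈ C, v = u1 ∨ v = u2 := by
          intro v hv
          rcases Finset.mem_insert.mp (hCins ▸ hv) with h | h
          · exact Or.inl h
          · exact Or.inr (by rwa [hC1eq, Finset.mem_singleton] at h)
        have hCcard : C.card = 2 := by
          rw [← hCins, Finset.card_insert_of_notMem (by rw [hC1eq]; simp [h12.ne]), hC1eq]
          rfl
        refine ⟨{u1}, ?_, ?_⟩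
        · intro v hv
          rcases hCmem v hv with h | h
          · exact ⟨u1, Finset.mem_singleton_self _, h.ge, by rw [h]; omega⟩
          · refine ⟨u1, Finset.mem_singleton_self _, h ▸ h12.le, ?_⟩
            rw [h]
            have hr : ((u2 + e : ℤ) : ℝ) < ((u1 + w : ℤ) : ℝ) := by push_cast; linarith
            exact (Int.cast_lt.mp hr).le
        · have : (C.filter Bad).card ≤ C.card := Finset.card_le_card (Finset.filter_subset _ _)
          simp only [Finset.card_singleton]
          omega
      · set u3 := C2.min' hC2ne with hu3def
        have hu3C2 : u3 ∈ C2 := C2.min'_mem hC2ne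
        have hu3C1 : u3 ∈ C1 := Finset.mem_of_mem_erase hu3C2
        have hu3C : u3 ∈ C := Finset.mem_of_mem_erase hu3C1
        have h23 : u2 < u3 := lt_of_le_of_ne (C1.min'_le u3 hu3C1)
          (Ne.symm (Finset.ne_of_mem_erase hu3C2))
        have hmin2 : ∀ v ∈ C2, u3 ≤ v := fun v hv => C2.min'_le v hv
        have hC2card : C.card = C2.card + 2 := by
          rw [hC2def, Finset.card_erase_of_mem hu2C1]
          have h1C : 1 ≤ C1.card := Finset.card_pos.mpr hC1ne
          omega
        by_cases hQ : (u3 : ℝ) - (u2 : ℝ) < (e : ℝ) + d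
        · -- triple: consume u1, u2, u3
          set C3 := C2.erase u3 with hC3def
          have hC2ins : insert u3 C3 = C2 := Finset.insert_erase hu3C2
          have hC3card : C.card = C3.card + 3 := by
            rw [hC3def, Finset.card_erase_of_mem hu3C2]
            have : 1 ≤ C2.card := Finset.card_pos.mpr hC2ne
            omega
          have hmem3 : ∀ x ∈ C, x = u1 ∨ x = u2 ∨ x = u3 ∨ x ∈ C3 := by
            intro x hx
            rcases Finset.mem_insert.mp (hCins ▸ hx) with h | h
            · exact Or.inl h
            rcases Finset.mem_insert.mp (hC1ins ▸ h) with h' | h'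
            · exact Or.inr (Or.inl h')
            rcases Finset.mem_insert.mp (hC2ins ▸ h') with h'' | h''
            · exact Or.inr (Or.inr (Or.inl h''))
            · exact Or.inr (Or.inr (Or.inr h''))
          have Hyp3 : ∀ b ∈ C3, Bad b → (∃ q ∈ C3, q ≠ b ∧ |(b : ℝ) - (q : ℝ)| < (e : ℝ) + d) ∨
              (true = true ∧ ∀ v ∈ C3, b ≤ v) := by
            intro b hb hBad
            have hbC2 : b ∈ C2 := Finset.mem_of_mem_erase hb
            have hbC : b ∈ C := Finset.mem_of_mem_erase (Finset.mem_of_mem_erase hbC2)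
            have hb3 : u3 < b := lt_of_le_of_ne (hmin2 b hbC2)
              (Ne.symm (Finset.ne_of_mem_erase hb))
            rcases Hyp b hbC hBad with ⟨q, hqC, hqne, hqd⟩ | ⟨_, hbm⟩
            · by_cases hqC3 : q ∈ C3
              · exact Or.inl ⟨q, hqC3, hqne, hqd⟩
              · have hqle : q ≤ u3 := by
                  rcases hmem3 q hqC with rfl | rfl | rfl | h
                  · exact le_of_lt (h12.trans h23)
                  · exact h23.le
                  · exact le_rfl
                  · exact absurd h hqC3
                have hqb : q < b := lt_of_le_of_lt hqle hb3
                have hC3ne : C3.Nonempty := ⟨b, hb⟩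
                set t := C3.min' hC3ne with htdef
                have htC3 : t ∈ C3 := C3.min'_mem hC3ne
                have htb : t ≤ b := C3.min'_le b hb
                by_cases htb' : t = b
                · exact Or.inr ⟨rfl, fun v hv => htb' ▸ C3.min'_le v hv⟩
                · left
                  have htlt : t < b := lt_of_le_of_ne htb htb'
                  have hu3t : u3 < t := lt_of_le_of_ne
                    (hmin2 t (Finset.mem_of_mem_erase htC3))
                    (Ne.symm (Finset.ne_of_mem_erase htC3))
                  refine ⟨t, htC3, htb', ?_⟩
                  have h1 : |(b : ℝ) - (t : ℝ)| = (b : ℝ) - t :=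
                    abs_of_pos (by exact_mod_cast sub_pos.mpr htlt)
                  have h2 : |(b : ℝ) - (q : ℝ)| = (b : ℝ) - q :=
                    abs_of_pos (by exact_mod_cast sub_pos.mpr hqb)
                  have h3 : (q : ℝ) ≤ (t : ℝ) := by
                    exact_mod_cast (hqle.trans hu3t.le)
                  rw [h1]; rw [h2] at hqd; linarith
            · exact absurd (le_antisymm (hbm u1 hu1C) (hmin b hbC))
                (Finset.ne_of_mem_erase (Finset.mem_of_mem_erase hbC2))
          obtain ⟨T3, cov3, cnt3⟩ := ih C3 (by omega) true Hyp3
          have cnt3' : 2 * T3.card + (C3.filter Bad).card ≤ 2 * C3.card + 1 := by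
            simpa using cnt3
          refine ⟨insert u1 T3, ?_, ?_⟩
          · intro v hv
            rcases hmem3 v hv with h | h | h | hvC3
            · exact ⟨u1, Finset.mem_insert_self _ _, h.ge,
                by rw [h]; omega⟩
            · refine ⟨u1, Finset.mem_insert_self _ _, h ▸ h12.le, ?_⟩
              rw [h]
              have hr : ((u2 + e : ℤ) : ℝ) < ((u1 + w : ℤ) : ℝ) := by push_cast; linarith
              exact (Int.cast_lt.mp hr).le
            · refine ⟨u1, Finset.mem_insert_self _ _, h ▸ (h12.trans h23).le, ?_⟩
              rw [h]
              have hr : ((u3 + e : ℤ) : ℝ) < ((u1 + w : ℤ) : ℝ) := by push_cast; linarith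
              exact (Int.cast_lt.mp hr).le
            · obtain ⟨t, ht, ht1, ht2⟩ := cov3 v hvC3
              exact ⟨t, Finset.mem_insert_of_mem ht, ht1, ht2⟩
          · have hfil : (C.filter Bad).card ≤ (C3.filter Bad).card + 3 := by
              have hsub : C.filter Bad ⊆ insert u1 (insert u2 (insert u3 (C3.filter Bad))) := by
                intro x hx
                obtain ⟨hxC, hxB⟩ := Finset.mem_filter.mp hx
                rcases hmem3 x hxC with rfl | rfl | rfl | h
                · exact Finset.mem_insert_self _ _
                · exact Finset.mem_insert_of_mem (Finset.mem_insert_self _ _)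
                · exact Finset.mem_insert_of_mem (Finset.mem_insert_of_mem
                    (Finset.mem_insert_self _ _))
                · exact Finset.mem_insert_of_mem (Finset.mem_insert_of_mem
                    (Finset.mem_insert_of_mem (Finset.mem_filter.mpr ⟨h, hxB⟩)))
              calc (C.filter Bad).card
                  ≤ (insert u1 (insert u2 (insert u3 (C3.filter Bad)))).card :=
                    Finset.card_le_card hsub
                _ ≤ (insert u2 (insert u3 (C3.filter Bad))).card + 1 := Finset.card_insert_le _ _
                _ ≤ (insert u3 (C3.filter Bad)).card + 2 := by
                    have := Finset.card_insert_le u2 (insert u3 (C3.filter Bad)); omega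
                _ ≤ (C3.filter Bad).card + 3 := by
                    have := Finset.card_insert_le u3 (C3.filter Bad); omega
            have hT : (insert u1 T3).card ≤ T3.card + 1 := Finset.card_insert_le _ _
            have : 2 * (insert u1 T3).card + (C.filter Bad).card ≤ 2 * C.card := by omega
            exact this.trans (Nat.le_add_right _ _)
        · -- pair: consume u1, u2; gap to u3 is large
          have Hyp2 : ∀ b ∈ C2, Bad b → (∃ q ∈ C2, q ≠ b ∧ |(b : ℝ) - (q : ℝ)| < (e : ℝ) + d) ∨
              (false = true ∧ ∀ v ∈ C2, b ≤ v) := by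
            intro b hb hBad
            have hbC1 : b ∈ C1 := Finset.mem_of_mem_erase hb
            have hbC : b ∈ C := Finset.mem_of_mem_erase hbC1
            have hbne1 : b ≠ u1 := Finset.ne_of_mem_erase hbC1
            have hbne2 : b ≠ u2 := Finset.ne_of_mem_erase hb
            have hb3 : u3 ≤ b := hmin2 b hb
            rcases Hyp b hbC hBad with ⟨q, hqC, hqne, hqd⟩ | ⟨_, hbm⟩
            · left
              have hqC2 : q ∈ C2 := by
                by_contra hqn
                have hqle : q ≤ u2 := by
                  rcases Finset.mem_insert.mp (hCins ▸ hqC) with h | h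
                  · exact h ▸ h12.le
                  rcases Finset.mem_insert.mp (hC1ins ▸ h) with h' | h'
                  · exact h'.le
                  · exact absurd h' hqn
                have hqb : q < b := lt_of_lt_of_le (lt_of_le_of_lt hqle h23) hb3
                exact absurd hqd (by
                  have habs : |(b : ℝ) - (q : ℝ)| = (b : ℝ) - q :=
                    abs_of_pos (by exact_mod_cast sub_pos.mpr hqb)
                  have h1 : (u3 : ℝ) ≤ (b : ℝ) := by exact_mod_cast hb3
                  have h2 : (q : ℝ) ≤ (u2 : ℝ) := by exact_mod_cast hqle
                  push_neg at hQ
                  rw [habs, not_lt]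
                  linarith)
              exact ⟨q, hqC2, hqne, hqd⟩
            · exact absurd (le_antisymm (hbm u1 hu1C) (hmin b hbC)) hbne1
          obtain ⟨T2, cov2, cnt2⟩ := ih C2 (by omega) false Hyp2
          have cnt2' : 2 * T2.card + (C2.filter Bad).card ≤ 2 * C2.card := by simpa using cnt2
          refine ⟨insert u1 T2, ?_, ?_⟩
          · intro v hv
            rcases Finset.mem_insert.mp (hCins ▸ hv) with h | hv1
            · exact ⟨u1, Finset.mem_insert_self _ _, h.ge,
                by rw [h]; omega⟩
            rcases Finset.mem_insert.mp (hC1ins ▸ hv1) with h | hv2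
            · refine ⟨u1, Finset.mem_insert_self _ _, h ▸ h12.le, ?_⟩
              rw [h]
              have hr : ((u2 + e : ℤ) : ℝ) < ((u1 + w : ℤ) : ℝ) := by push_cast; linarith
              exact (Int.cast_lt.mp hr).le
            · obtain ⟨t, ht, ht1, ht2⟩ := cov2 v hv2
              exact ⟨t, Finset.mem_insert_of_mem ht, ht1, ht2⟩
          · have hfil : (C.filter Bad).card ≤ (C2.filter Bad).card + 2 := by
              have hsub : C.filter Bad ⊆ insert u1 (insert u2 (C2.filter Bad)) := by
                intro x hx
                obtain ⟨hxC, hxB⟩ := Finset.mem_filter.mp hx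
                by_cases hx1 : x = u1
                · exact hx1 ▸ Finset.mem_insert_self _ _
                by_cases hx2 : x = u2
                · exact Finset.mem_insert_of_mem (hx2 ▸ Finset.mem_insert_self _ _)
                · exact Finset.mem_insert_of_mem (Finset.mem_insert_of_mem
                    (Finset.mem_filter.mpr
                      ⟨Finset.mem_erase.mpr ⟨hx2, Finset.mem_erase.mpr ⟨hx1, hxC⟩⟩, hxB⟩))
              calc (C.filter Bad).card
                  ≤ (insert u1 (insert u2 (C2.filter Bad))).card := Finset.card_le_card hsub
                _ ≤ (insert u2 (C2.filter Bad)).card + 1 := Finset.card_insert_le _ _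
                _ ≤ (C2.filter Bad).card + 2 := by
                    have := Finset.card_insert_le u2 (C2.filter Bad); omega
            have hT : (insert u1 T2).card ≤ T2.card + 1 := Finset.card_insert_le _ _
            have : 2 * (insert u1 T2).card + (C.filter Bad).card ≤ 2 * C.card := by omega
            exact this.trans (Nat.le_add_right _ _)


lemma merge_card (M a : ℝ) (hM0 : 0 ≤ M) (γ : Finset ℤ) (n m : ℕ)
    (hw : 3 * ((2:ℝ) ^ n) + 2 * (2 * M * (2:ℝ) ^ (a * n)) ≤ ((2:ℤ) ^ m : ℤ)) :
    2 * (cover m γ).card + (cover n γ).card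
      ≤ 2 * (cover n γ).card + (isoCover M a n γ).card := by
  set d : ℝ := 2 * M * (2:ℝ) ^ (a * n) with hd
  have hd0 : 0 ≤ d := by positivity
  have hwZ : 3 * (((2:ℤ) ^ n : ℤ) : ℝ) + 2 * d ≤ (((2:ℤ) ^ m : ℤ) : ℝ) := by
    push_cast
    push_cast at hw
    linarith
  set P : ℤ → Prop := fun u => ∀ u' ∈ cover n γ, u' ≠ u →
    2 * M * (2 : ℝ) ^ (a * n) ≤ |(u : ℝ) - (u' : ℝ)| - 2 ^ n with hP
  have Hyp : ∀ b ∈ cover n γ, (¬ P b) →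
      (∃ p ∈ cover n γ, p ≠ b ∧ |(b : ℝ) - (p : ℝ)| < (((2:ℤ) ^ n : ℤ) : ℝ) + d) ∨
        (false = true ∧ ∀ v ∈ cover n γ, b ≤ v) := by
    intro b hb hBad
    left
    have hBad' : ∃ u' ∈ cover n γ, u' ≠ b ∧
        ¬(2 * M * (2 : ℝ) ^ (a * n) ≤ |(b : ℝ) - (u' : ℝ)| - 2 ^ n) := by
      by_contra hcon
      push_neg at hcon
      exact hBad fun u' hu' hne' => hcon u' hu' hne'
    obtain ⟨u', hu', hune, hlt⟩ := hBad'
    rw [not_le] at hlt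
    refine ⟨u', hu', hune, ?_⟩
    have hc2 : (((2:ℤ) ^ n : ℤ) : ℝ) = (2:ℝ) ^ n := by push_cast; ring
    rw [hc2, hd]
    linarith
  obtain ⟨T, cov, cnt⟩ := merge_aux ((2:ℤ) ^ n) ((2:ℤ) ^ m) (by positivity) d hd0 hwZ
    (fun u => ¬ P u) (cover n γ).card (cover n γ) le_rfl false Hyp
  have cnt' : 2 * T.card + ((cover n γ).filter (fun u => ¬ P u)).card
      ≤ 2 * (cover n γ).card := by
    have h := cnt
    rw [Finset.filter_congr_decidable] at h
    simpa using h
  have hcovγ : ∀ x ∈ γ, ∃ t ∈ T, t ≤ x ∧ x < t + 2 ^ m := by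
    intro x hx
    obtain ⟨u, hu, h1, h2⟩ := cover_covers n γ.card γ le_rfl x hx
    obtain ⟨t, ht, ht1, ht2⟩ := cov u hu
    exact ⟨t, ht, ht1.trans h1, by omega⟩
  have hmle : (cover m γ).card ≤ T.card := cover_card_le m γ.card γ le_rfl T hcovγ
  have hfil : ((cover n γ).filter P).card + ((cover n γ).filter (fun u => ¬ P u)).card
      = (cover n γ).card := Finset.card_filter_add_card_filter_not (p := P)
  have hiso : (isoCover M a n γ).card = ((cover n γ).filter P).card := rfl
  omega

lemma zetaR_summable {s : ℝ} (hs : 1 < s) : Summable fun n : ℕ => 1 / ((n : ℝ) + 1) ^ s := by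
  have h0 : Summable fun n : ℕ => 1 / (n : ℝ) ^ s := Real.summable_one_div_nat_rpow.mpr hs
  have h1 : Summable fun n : ℕ => 1 / ((n + 1 : ℕ) : ℝ) ^ s :=
    (summable_nat_add_iff 1).mpr h0
  convert h1 using 2 with n
  push_cast
  ring_nf

lemma zetaR_term_nonneg (s : ℝ) (n : ℕ) : 0 ≤ 1 / ((n : ℝ) + 1) ^ s := by positivity

lemma bernoulli_aux {u p : ℝ} (hu : 0 < u) (hp : 0 < p) : 1 - p * u ≤ (1 + u) ^ (-p) := by
  rcases le_or_gt (1 - p * u) 0 with h | h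
  · exact h.trans (Real.rpow_pos_of_pos (by linarith) _).le
  · have h1u : (0:ℝ) < 1 + u := by linarith
    have hle : (1 + u) ^ p ≤ Real.exp (p * u) := by
      rw [Real.rpow_def_of_pos h1u]
      apply Real.exp_le_exp.mpr
      have := Real.log_le_sub_one_of_pos h1u
      nlinarith [Real.log_le_sub_one_of_pos h1u]
    have h2 : (1 - p * u) * Real.exp (p * u) ≤ 1 := by
      have := Real.add_one_le_exp (-(p * u))
      have hpos := Real.exp_pos (p * u)
      have hinv : Real.exp (-(p * u)) * Real.exp (p * u) = 1 := by
        rw [← Real.exp_add]; simp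
      nlinarith
    have h3 : (1 - p * u) * (1 + u) ^ p ≤ 1 := by
      have hpw : (0:ℝ) < (1 + u) ^ p := Real.rpow_pos_of_pos h1u _
      nlinarith
    have hpw : (0:ℝ) < (1 + u) ^ p := Real.rpow_pos_of_pos h1u _
    rw [Real.rpow_neg h1u.le, ← one_div, le_div_iff₀ hpw]
    exact h3

lemma zetaR_key {s : ℝ} (hs : 1 < s) (n : ℕ) :
    ((n : ℝ) + 1) ^ (1 - s) - ((n : ℝ) + 2) ^ (1 - s) ≤ (s - 1) * (1 / ((n : ℝ) + 1) ^ s) := by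
  set x : ℝ := (n : ℝ) + 1 with hx
  have hx0 : (0:ℝ) < x := by positivity
  have hx1 : (1:ℝ) ≤ x := by simp [hx]
  have hb := bernoulli_aux (u := 1/x) (p := s - 1) (by positivity) (by linarith)
  -- (1 + 1/x)^(1-s) ≥ 1 - (s-1)/x ; multiply by x^(1-s)
  have hxpow : (0:ℝ) < x ^ (1 - s) := Real.rpow_pos_of_pos hx0 _
  have hmul : (x * (1 + 1/x)) = x + 1 := by field_simp
  have hone : (x + 1) ^ (1 - s) = x ^ (1 - s) * (1 + 1/x) ^ (1 - s) := by
    rw [← Real.mul_rpow hx0.le (by positivity), hmul]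
  have hineq : x ^ (1 - s) * (1 - (s - 1) * (1/x)) ≤ (x + 1) ^ (1 - s) := by
    rw [hone]
    apply mul_le_mul_of_nonneg_left _ hxpow.le
    have : -(s - 1) = 1 - s := by ring
    rw [← this]
    exact hb
  have hxs : x ^ (1 - s) * x ^ (-1 : ℝ) = x ^ (-s) := by
    rw [← Real.rpow_add hx0]; ring_nf
  have hexp : x ^ (1 - s) * ((s - 1) * (1/x)) = (s - 1) * x ^ (-s) := by
    rw [Real.rpow_neg_one] at hxs
    rw [one_div]
    calc x ^ (1 - s) * ((s - 1) * x⁻¹) = (s - 1) * (x ^ (1 - s) * x⁻¹) := by ring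
      _ = (s - 1) * x ^ (-s) := by rw [hxs]
  have hxn : x ^ (-s) = 1 / x ^ s := by
    rw [Real.rpow_neg hx0.le]; ring
  have hx2 : ((n : ℝ) + 2) = x + 1 := by rw [hx]; ring
  rw [hx2]
  have expand : x ^ (1 - s) * (1 - (s - 1) * (1/x)) = x ^ (1-s) - (s-1) * x^(-s) := by
    rw [mul_sub, mul_one, hexp]
  rw [expand] at hineq
  rw [hxn] at hineq
  linarith

lemma zetaR_ge {s : ℝ} (hs : 1 < s) : 1 / (s - 1) ≤ zetaR s := by
  have hs0 : (0:ℝ) < s - 1 := by linarith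
  set F : ℕ → ℝ := fun n => ((n : ℝ) + 1) ^ (1 - s) / (s - 1) with hF
  have hpart : ∀ K : ℕ, F 0 - F K ≤ zetaR s := by
    intro K
    have htel : ∑ n ∈ Finset.range K, (F n - F (n + 1)) = F 0 - F K :=
      Finset.sum_range_sub' F K
    have hterm : ∀ n ∈ Finset.range K, F n - F (n + 1) ≤ 1 / ((n : ℝ) + 1) ^ s := by
      intro n _
      have := zetaR_key hs n
      have hF1 : F (n + 1) = ((n : ℝ) + 2) ^ (1 - s) / (s - 1) := by
        rw [hF]; push_cast; ring_nf
      have hFn : F n = ((n : ℝ) + 1) ^ (1 - s) / (s - 1) := rfl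
      rw [hFn, hF1]
      rw [div_sub_div_same, div_le_iff₀ hs0]
      calc ((n : ℝ) + 1) ^ (1 - s) - ((n : ℝ) + 2) ^ (1 - s)
          ≤ (s - 1) * (1 / ((n : ℝ) + 1) ^ s) := this
        _ = 1 / ((n : ℝ) + 1) ^ s * (s - 1) := by ring
    calc F 0 - F K = ∑ n ∈ Finset.range K, (F n - F (n + 1)) := htel.symm
      _ ≤ ∑ n ∈ Finset.range K, 1 / ((n : ℝ) + 1) ^ s := Finset.sum_le_sum hterm
      _ ≤ zetaR s := Summable.sum_le_tsum _ (fun i _ => zetaR_term_nonneg s i) (zetaR_summable hs)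
  have hF0 : F 0 = 1 / (s - 1) := by
    rw [hF]
    norm_num
  have hlim : Filter.Tendsto (fun K : ℕ => F 0 - F K) Filter.atTop (nhds (1 / (s - 1))) := by
    have h1 : Filter.Tendsto (fun K : ℕ => ((K : ℝ) + 1)) Filter.atTop Filter.atTop :=
      Filter.tendsto_atTop_add_const_right _ 1 tendsto_natCast_atTop_atTop
    have h2 : Filter.Tendsto (fun x : ℝ => x ^ (-(s-1))) Filter.atTop (nhds 0) :=
      tendsto_rpow_neg_atTop hs0
    have h3 : Filter.Tendsto (fun K : ℕ => ((K : ℝ) + 1) ^ (1 - s)) Filter.atTop (nhds 0) := by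
      have : (fun K : ℕ => ((K : ℝ) + 1) ^ (1 - s)) =
          (fun x : ℝ => x ^ (-(s-1))) ∘ (fun K : ℕ => ((K : ℝ) + 1)) := by
        funext K
        show ((K : ℝ) + 1) ^ (1 - s) = ((K : ℝ) + 1) ^ (-(s - 1))
        rw [show (1 - s) = -(s - 1) by ring]
      rw [this]
      exact h2.comp h1
    have h4 : Filter.Tendsto (fun K : ℕ => F K) Filter.atTop (nhds 0) := by
      have : (fun K : ℕ => F K) = fun K : ℕ => ((K : ℝ) + 1) ^ (1 - s) / (s - 1) := rfl
      rw [this]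
      simpa using h3.div_const (s - 1)
    have := (tendsto_const_nhds (x := F 0) (f := Filter.atTop (α := ℕ))).sub h4
    simpa [hF0] using this
  exact le_of_tendsto hlim (Filter.Eventually.of_forall hpart)

set_option maxHeartbeats 1000000 in
/-- comparison of the two cover sizes, `𝒩(γ) ≤ c(M,a)·𝒩'(γ)` with
`c(M,a) = 6·(2a/(a−1))^{log_a 2}·ζ(log_a 2)·(log₂(8M))^{log_a 2}`. -/
theorem coverSize_le_isoCoverSize (M a : ℝ) (ha1 : 1 < a) (ha2 : a < 2) (hM : 1 < M)
    (hMa : 3 / (2 - a) ≤ Real.logb 2 (8 * M))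
    (γ : Finset ℤ) (hne : γ.Nonempty) (heven : Even γ.card) :
    (coverSize γ : ℝ)
      ≤ 6 * (2 * a / (a - 1)) ^ Real.logb a 2 * zetaR (Real.logb a 2) *
          Real.logb 2 (8 * M) ^ Real.logb a 2 * (isoCoverSize M a γ : ℝ) := by
  have ha0 : (0:ℝ) < a := by linarith
  have h2a : (0:ℝ) < 2 - a := by linarith
  set L := Real.logb 2 (8 * M) with hLdef
  have hL3 : 3 ≤ L * (2 - a) := by
    rw [div_le_iff₀ h2a] at hMa
    linarith
  have hLge3 : 3 ≤ L := by nlinarith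
  have hL0 : (0:ℝ) < L := by linarith
  set s := Real.logb a 2 with hsdef
  have hla : 0 < Real.log a := Real.log_pos ha1
  have hl2 : Real.log a < Real.log 2 := Real.log_lt_log (by linarith) ha2
  have hs1 : 1 < s := by
    rw [hsdef, Real.logb, one_lt_div hla]
    exact hl2
  have hs0 : (0:ℝ) < s - 1 := by linarith
  set K0 := n0 γ with hK0
  set N : ℕ → ℕ := fun k => (cover k γ).card with hN
  set N' : ℕ → ℕ := fun k => (isoCover M a k γ).card with hN'
  set G : ℕ := γ.card with hG
  have hG1 : 1 ≤ G := Finset.card_pos.mpr hne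
  have hNanti : ∀ {p q : ℕ}, p ≤ q → N q ≤ N p := fun h => cover_card_antitone h γ
  have hNpos : ∀ k, 1 ≤ N k := fun k => cover_card_pos hne k
  have hNG : ∀ k, N k ≤ G := fun k => cover_card_le_card k γ
  have hNtop : ∀ k, K0 + 1 ≤ k → N k = 1 := fun k hk => cover_card_top hne hk
  have hN'N : ∀ k, N' k ≤ N k := fun k => Finset.card_le_card (Finset.filter_subset _ _)
  set mf : ℕ → ℕ := fun n => ⌈a * n + L⌉₊ with hmf
  -- the merging inequality
  have hmerge : ∀ n : ℕ, 2 * N (mf n) + N n ≤ 2 * N n + N' n := by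
    intro n
    apply merge_card M a (by linarith) γ n (mf n)
    have hcl : (2:ℝ) ^ L = 8 * M := by
      rw [hLdef]
      exact Real.rpow_logb (by norm_num) (by norm_num) (by linarith)
    have hge : a * n + L ≤ (mf n : ℝ) := Nat.le_ceil _
    have h2m : (2:ℝ) ^ (a * n + L) ≤ ((2:ℤ) ^ (mf n) : ℤ) := by
      have e1 : (((2:ℤ) ^ (mf n) : ℤ) : ℝ) = (2:ℝ) ^ ((mf n : ℕ) : ℝ) := by
        push_cast
        rw [Real.rpow_natCast]
      rw [e1]
      exact Real.rpow_le_rpow_of_exponent_le (by norm_num) hge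
    have hsplit : (2:ℝ) ^ (a * n + L) = (2:ℝ) ^ (a * n) * (8 * M) := by
      rw [Real.rpow_add (by norm_num), hcl]
    have hnan : (2:ℝ) ^ (n : ℕ) ≤ (2:ℝ) ^ (a * n) := by
      rw [← Real.rpow_natCast 2 n]
      apply Real.rpow_le_rpow_of_exponent_le (by norm_num)
      nlinarith [Nat.cast_nonneg (α := ℝ) n]
    have hpos : (0:ℝ) < (2:ℝ) ^ (a * n) := Real.rpow_pos_of_pos (by norm_num) _
    nlinarith [hnan, hpos, h2m, hsplit]
  -- real-valued difference function
  set DD : ℕ → ℝ := fun j => (N j : ℝ) - (N (j + 1) : ℝ) with hDD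
  have hDD0 : ∀ j, 0 ≤ DD j := fun j =>
    sub_nonneg.mpr (Nat.cast_le.mpr (hNanti (Nat.le_succ j)))
  set S1 : ℝ := ∑ n ∈ Finset.Icc 1 K0, (N n : ℝ) with hS1
  set SP : ℝ := ∑ n ∈ Finset.Icc 1 K0, (N' n : ℝ) with hSP
  have hS1nn : 0 ≤ S1 := Finset.sum_nonneg fun i _ => Nat.cast_nonneg _
  have hSPnn : 0 ≤ SP := Finset.sum_nonneg fun i _ => Nat.cast_nonneg _
  -- step 2 : per-scale bound by indicator sums
  have step2 : ∀ n ∈ Finset.Icc 1 K0, (N n : ℝ) - (N (mf n) : ℝ) ≤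
      ∑ j ∈ Finset.Icc 1 K0, (if n ≤ j ∧ (j : ℝ) < a * n + L then DD j else 0) := by
    intro n hn
    obtain ⟨hn1, hn2⟩ := Finset.mem_Icc.mp hn
    have hnmf : n < mf n := by
      rw [hmf]
      apply Nat.lt_ceil.mpr
      have : (n : ℝ) ≤ a * n := by nlinarith [Nat.cast_nonneg (α := ℝ) n]
      linarith
    set Km := min (mf n) (K0 + 1) with hKm
    have hnKm : n ≤ Km := le_min hnmf.le (by omega)
    have hNm : N (mf n) = N Km := by
      rcases le_or_gt (mf n) (K0 + 1) with h | h
      · rw [hKm, min_eq_left h]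
      · rw [hKm, min_eq_right h.le, hNtop (mf n) (by omega), hNtop (K0 + 1) le_rfl]
    have htl : (N n : ℝ) - (N Km : ℝ) = ∑ j ∈ Finset.Ico n Km, DD j :=
      (tele_sum (fun j => (N j : ℝ)) hnKm).symm
    rw [hNm, htl, ← Finset.sum_filter]
    apply Finset.sum_le_sum_of_subset_of_nonneg
    · intro j hj
      obtain ⟨hj1, hj2⟩ := Finset.mem_Ico.mp hj
      rw [Finset.mem_filter, Finset.mem_Icc]
      have hjK0 : j ≤ K0 := by omega
      refine ⟨⟨by omega, hjK0⟩, hj1, ?_⟩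
      have : j < mf n := lt_of_lt_of_le hj2 (min_le_left _ _)
      rw [hmf] at this
      exact Nat.lt_ceil.mp this
    · exact fun j _ _ => hDD0 j
  -- the indicator count
  set cnt : ℕ → ℕ := fun j =>
    ((Finset.Icc 1 K0).filter (fun n => n ≤ j ∧ (j : ℝ) < a * n + L)).card with hcnt
  have hcntb : ∀ j ∈ Finset.Icc 1 K0, a * (cnt j : ℝ) ≤ (a - 1) * j + L + a := by
    intro j hj
    obtain ⟨hj1, hj2⟩ := Finset.mem_Icc.mp hj
    rcases lt_or_ge (j : ℝ) L with hjL | hjL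
    · have hsub : (Finset.Icc 1 K0).filter (fun n => n ≤ j ∧ (j : ℝ) < a * n + L) ⊆
          Finset.Icc 1 j := by
        intro n hn
        obtain ⟨hn', hcond⟩ := Finset.mem_filter.mp hn
        exact Finset.mem_Icc.mpr ⟨(Finset.mem_Icc.mp hn').1, hcond.1⟩
      have hcard : cnt j ≤ j := by
        rw [hcnt]
        calc _ ≤ (Finset.Icc 1 j).card := Finset.card_le_card hsub
          _ = j := by rw [Nat.card_Icc]; omega
      have hcR : (cnt j : ℝ) ≤ j := by exact_mod_cast hcard
      nlinarith [Nat.cast_nonneg (α := ℝ) j]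
    · set q : ℝ := ((j : ℝ) - L) / a with hq
      have hq0 : 0 ≤ q := div_nonneg (by linarith) ha0.le
      have hsub : (Finset.Icc 1 K0).filter (fun n => n ≤ j ∧ (j : ℝ) < a * n + L) ⊆
          Finset.Ioc ⌊q⌋₊ j := by
        intro n hn
        obtain ⟨hn', hcond⟩ := Finset.mem_filter.mp hn
        rw [Finset.mem_Ioc]
        refine ⟨?_, hcond.1⟩
        apply (Nat.floor_lt hq0).mpr
        rw [hq, div_lt_iff₀ ha0]
        nlinarith [hcond.2]
      have hcard : cnt j ≤ j - ⌊q⌋₊ := by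
        rw [hcnt]
        calc _ ≤ (Finset.Ioc ⌊q⌋₊ j).card := Finset.card_le_card hsub
          _ = j - ⌊q⌋₊ := by rw [Nat.card_Ioc]
      rcases Nat.eq_zero_or_pos (cnt j) with h0 | hpos
      · rw [h0]
        push_cast
        nlinarith [Nat.cast_nonneg (α := ℝ) j]
      · have hfj : ⌊q⌋₊ ≤ j := by omega
        have hcR : (cnt j : ℝ) ≤ (j : ℝ) - (⌊q⌋₊ : ℝ) := by
          have : ((j - ⌊q⌋₊ : ℕ) : ℝ) = (j : ℝ) - (⌊q⌋₊ : ℝ) := by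
            push_cast [hfj]
            ring
          rw [← this]
          exact_mod_cast hcard
        have hfl : q - 1 < (⌊q⌋₊ : ℝ) := Nat.sub_one_lt_floor q
        have haq : a * q = (j : ℝ) - L := by
          rw [hq]
          field_simp
        have hmul : a * (cnt j : ℝ) ≤ a * ((j : ℝ) - (⌊q⌋₊ : ℝ)) :=
          mul_le_mul_of_nonneg_left hcR ha0.le
        nlinarith [hmul, haq, mul_le_mul_of_nonneg_left hfl.le ha0.le]
  -- master inequality
  have master : a * (S1 - SP) ≤ 2 * (a - 1) * S1 + 2 * (L + a) * G := by
    have e0 : S1 - SP = ∑ n ∈ Finset.Icc 1 K0, ((N n : ℝ) - (N' n : ℝ)) := by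
      rw [hS1, hSP, ← Finset.sum_sub_distrib]
    have e1 : ∑ n ∈ Finset.Icc 1 K0, ((N n : ℝ) - (N' n : ℝ)) ≤
        2 * ∑ n ∈ Finset.Icc 1 K0, ((N n : ℝ) - (N (mf n) : ℝ)) := by
      rw [Finset.mul_sum]
      apply Finset.sum_le_sum
      intro n _
      have := hmerge n
      have hce : (2 * N (mf n) + N n : ℝ) ≤ (2 * N n + N' n : ℝ) := by exact_mod_cast this
      push_cast at hce
      linarith
    have e2 : ∑ n ∈ Finset.Icc 1 K0, ((N n : ℝ) - (N (mf n) : ℝ)) ≤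
        ∑ n ∈ Finset.Icc 1 K0, ∑ j ∈ Finset.Icc 1 K0,
          (if n ≤ j ∧ (j : ℝ) < a * n + L then DD j else 0) :=
      Finset.sum_le_sum step2
    have e3 : ∑ n ∈ Finset.Icc 1 K0, ∑ j ∈ Finset.Icc 1 K0,
          (if n ≤ j ∧ (j : ℝ) < a * n + L then DD j else 0)
        = ∑ j ∈ Finset.Icc 1 K0, (cnt j : ℝ) * DD j := by
      rw [Finset.sum_comm]
      apply Finset.sum_congr rfl
      intro j _
      rw [← Finset.sum_filter, Finset.sum_const, nsmul_eq_mul, hcnt]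
    have e4 : a * ∑ j ∈ Finset.Icc 1 K0, (cnt j : ℝ) * DD j ≤
        ∑ j ∈ Finset.Icc 1 K0, ((a - 1) * j + L + a) * DD j := by
      rw [Finset.mul_sum]
      apply Finset.sum_le_sum
      intro j hj
      have := hcntb j hj
      have := hDD0 j
      nlinarith
    have e5 : ∑ j ∈ Finset.Icc 1 K0, ((a - 1) * j + L + a) * DD j
        = (a - 1) * (∑ j ∈ Finset.Icc 1 K0, (j : ℝ) * DD j)
          + (L + a) * (∑ j ∈ Finset.Icc 1 K0, DD j) := by
      rw [Finset.mul_sum, Finset.mul_sum, ← Finset.sum_add_distrib]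
      apply Finset.sum_congr rfl
      intro j _
      ring
    have e6 : ∑ j ∈ Finset.Icc 1 K0, (j : ℝ) * DD j ≤ S1 := by
      have := abel_sum (fun j => (N j : ℝ)) K0
      rw [hDD]
      rw [this]
      have : (0:ℝ) ≤ (K0 : ℝ) * (N (K0 + 1) : ℝ) := by positivity
      rw [hS1]
      linarith
    have e7 : ∑ j ∈ Finset.Icc 1 K0, DD j ≤ (G : ℝ) := by
      have htel : ∑ j ∈ Finset.Ico 1 (K0 + 1), DD j = (N 1 : ℝ) - (N (K0 + 1) : ℝ) :=
        tele_sum (fun j => (N j : ℝ)) (by omega)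
      have hIcc : Finset.Icc 1 K0 = Finset.Ico 1 (K0 + 1) := by
        rw [Finset.Ico_add_one_right_eq_Icc]
      rw [hIcc, htel]
      have h1 : (N 1 : ℝ) ≤ G := by exact_mod_cast hNG 1
      have h2 : (0:ℝ) ≤ (N (K0 + 1) : ℝ) := Nat.cast_nonneg _
      linarith
    -- combine
    have c1 : S1 - SP ≤ 2 * ∑ j ∈ Finset.Icc 1 K0, (cnt j : ℝ) * DD j := by
      rw [e0]; rw [e3] at e2; linarith
    have c2 : a * (S1 - SP) ≤ 2 * (a * ∑ j ∈ Finset.Icc 1 K0, (cnt j : ℝ) * DD j) := by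
      nlinarith [c1, Finset.sum_nonneg (fun j (hj : j ∈ Finset.Icc 1 K0) =>
        mul_nonneg (Nat.cast_nonneg (cnt j)) (hDD0 j))]
    calc a * (S1 - SP) ≤ 2 * (a * ∑ j ∈ Finset.Icc 1 K0, (cnt j : ℝ) * DD j) := c2
      _ ≤ 2 * ((a - 1) * (∑ j ∈ Finset.Icc 1 K0, (j : ℝ) * DD j)
          + (L + a) * (∑ j ∈ Finset.Icc 1 K0, DD j)) := by rw [← e5]; linarith [e4]
      _ ≤ 2 * (a - 1) * S1 + 2 * (L + a) * G := by
          have h1 : (a - 1) * (∑ j ∈ Finset.Icc 1 K0, (j : ℝ) * DD j) ≤ (a - 1) * S1 :=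
            mul_le_mul_of_nonneg_left e6 (by linarith)
          have h2 : (L + a) * (∑ j ∈ Finset.Icc 1 K0, DD j) ≤ (L + a) * G :=
            mul_le_mul_of_nonneg_left e7 (by linarith)
          linarith
  -- identify coverSize and isoCoverSize
  have hCS : (coverSize γ : ℝ) = (N 0 : ℝ) + S1 := by
    have h1 : coverSize γ = ∑ n ∈ Finset.range (K0 + 1), N n := rfl
    have h2 : ∑ n ∈ Finset.range (K0 + 1), N n = N 0 + ∑ n ∈ Finset.Icc 1 K0, N n := by
      rw [Finset.range_eq_Ico, Finset.sum_eq_sum_Ico_succ_bot (by omega)]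
      rw [Finset.Ico_add_one_right_eq_Icc]
    rw [h1, h2, hS1]
    push_cast
    ring
  have hIS : (isoCoverSize M a γ : ℝ) = (G : ℝ) + SP := by
    have h1 : isoCoverSize M a γ = G + ∑ n ∈ Finset.Icc 1 K0, N' n := rfl
    rw [h1, hSP]
    push_cast
    ring
  -- the crude bound : coverSize ≤ (5 L / (2-a)) * isoCoverSize
  have f2 : (2 - a) * S1 ≤ a * SP + 2 * (L + a) * G := by nlinarith [master]
  have f3 : (2 - a) * (coverSize γ : ℝ) ≤ 5 * L * (isoCoverSize M a γ : ℝ) := by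
    rw [hCS, hIS]
    have hN0G : (N 0 : ℝ) ≤ (G : ℝ) := by exact_mod_cast hNG 0
    have hGnn : (0:ℝ) ≤ G := Nat.cast_nonneg _
    have t1 : (2 * L + a + 2) * (G : ℝ) ≤ 5 * L * G := by
      have : (0:ℝ) ≤ (5 * L - (2 * L + a + 2)) * G := by
        apply mul_nonneg _ hGnn
        linarith
      linarith
    have t2 : a * SP ≤ 5 * L * SP := by
      have : (0:ℝ) ≤ (5 * L - a) * SP := mul_nonneg (by linarith) hSPnn
      linarith
    have t3 : (2 - a) * (N 0 : ℝ) ≤ (2 - a) * G := mul_le_mul_of_nonneg_left hN0G h2a.le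
    nlinarith [f2, t1, t2, t3]
  have hfrac : (coverSize γ : ℝ) ≤ (5 * L / (2 - a)) * (isoCoverSize M a γ : ℝ) := by
    rw [div_mul_eq_mul_div, le_div_iff₀ h2a]
    nlinarith [f3]
  -- constant comparison
  have hconst : 5 * L / (2 - a) ≤ 6 * (2 * a / (a - 1)) ^ s * zetaR s * L ^ s := by
    have hz : 1 / (s - 1) ≤ zetaR s := zetaR_ge hs1
    have hzpos : (0:ℝ) < 1 / (s - 1) := by positivity
    have ha1' : (0:ℝ) < a - 1 := by linarith
    have hB : (4:ℝ) ≤ 2 * a / (a - 1) := by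
      rw [le_div_iff₀ ha1']
      nlinarith
    have hBs : (4:ℝ) ^ s ≤ (2 * a / (a - 1)) ^ s :=
      Real.rpow_le_rpow (by norm_num) hB (by linarith)
    have hLs : L * 3 ^ (s - 1) ≤ L ^ s := by
      have h1 : L ^ s = L ^ (1:ℝ) * L ^ (s - 1) := by
        rw [← Real.rpow_add hL0]
        ring_nf
      rw [h1, Real.rpow_one]
      exact mul_le_mul_of_nonneg_left
        (Real.rpow_le_rpow (by norm_num) hLge3 (by linarith)) hL0.le
    have h12s : s ≤ (12:ℝ) ^ (s - 1) := by
      have hlog12 : 1 ≤ Real.log 12 := by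
        rw [Real.le_log_iff_exp_le (by norm_num)]
        calc Real.exp 1 ≤ 2.7182818286 := Real.exp_one_lt_d9.le
          _ ≤ 12 := by norm_num
      calc s = 1 + (s - 1) := by ring
        _ ≤ 1 + (s - 1) * Real.log 12 := by nlinarith
        _ ≤ Real.exp ((s - 1) * Real.log 12) := by
            linarith [Real.add_one_le_exp ((s - 1) * Real.log 12)]
        _ = (12:ℝ) ^ (s - 1) := by
            rw [Real.rpow_def_of_pos (by norm_num)]
            ring_nf
    have hka : Real.log 2 * (s - 1) ≤ s * (2 - a) := by
      have hsa : s * Real.log a = Real.log 2 := by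
        rw [hsdef, Real.logb]
        field_simp
      have hdiff : Real.log 2 - Real.log a ≤ 2 - a := by
        have h1 : Real.log 2 - Real.log a = Real.log (2 / a) :=
          (Real.log_div (by norm_num) (by linarith)).symm
        have h2 : Real.log (2 / a) ≤ 2 / a - 1 :=
          Real.log_le_sub_one_of_pos (by positivity)
        have h3 : 2 / a ≤ 3 - a := by
          rw [div_le_iff₀ ha0]
          nlinarith
        linarith
      nlinarith [mul_le_mul_of_nonneg_left hdiff (by linarith : (0:ℝ) ≤ s)]
    have hmain : 5 * L * (s - 1) ≤ 24 * s * L * (2 - a) := by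
      have hln2 : (0.6931471803 : ℝ) < Real.log 2 := Real.log_two_gt_d9
      have hp : (0.6931471803 : ℝ) * (s - 1) < Real.log 2 * (s - 1) :=
        mul_lt_mul_of_pos_right hln2 hs0
      have h24 : 5 * (s - 1) ≤ 24 * (s * (2 - a)) := by linarith [hka, hp]
      linarith [mul_le_mul_of_nonneg_left h24 hL0.le]
    have step1 : 5 * L / (2 - a) ≤ 24 * s * L / (s - 1) := by
      rw [div_le_div_iff₀ h2a hs0]
      linarith [hmain]
    have step2' : 24 * s * L / (s - 1) ≤ 24 * (12:ℝ) ^ (s - 1) * L / (s - 1) := by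
      have hnum : 24 * s * L ≤ 24 * (12:ℝ) ^ (s - 1) * L := by
        linarith [mul_le_mul_of_nonneg_right h12s hL0.le]
      exact div_le_div_of_nonneg_right hnum hs0.le
    have step3 : 24 * (12:ℝ) ^ (s - 1) * L / (s - 1)
        = 6 * (4:ℝ) ^ s * (1 / (s - 1)) * (L * 3 ^ (s - 1)) := by
      have h4 : (4:ℝ) ^ s = 4 * 4 ^ (s - 1) := by
        rw [show s = 1 + (s - 1) by ring, Real.rpow_add (by norm_num), Real.rpow_one]
        ring_nf
      have h43 : (4:ℝ) ^ (s - 1) * 3 ^ (s - 1) = 12 ^ (s - 1) := by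
        rw [← Real.mul_rpow (by norm_num) (by norm_num)]
        norm_num
      rw [h4, ← h43]
      ring
    have step4 : 6 * (4:ℝ) ^ s * (1 / (s - 1)) * (L * 3 ^ (s - 1))
        ≤ 6 * (2 * a / (a - 1)) ^ s * zetaR s * L ^ s := by
      have p1 : (0:ℝ) < (4:ℝ) ^ s := Real.rpow_pos_of_pos (by norm_num) _
      have p3 : (0:ℝ) < L * 3 ^ (s - 1) :=
        mul_pos hL0 (Real.rpow_pos_of_pos (by norm_num) _)
      have hfa : (0:ℝ) < (2 * a / (a - 1)) ^ s :=
        Real.rpow_pos_of_pos (div_pos (by linarith) ha1') _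
      have hX : 6 * (4:ℝ) ^ s ≤ 6 * (2 * a / (a - 1)) ^ s :=
        mul_le_mul_of_nonneg_left hBs (by norm_num)
      have hY : 6 * (4:ℝ) ^ s * (1 / (s - 1)) ≤ 6 * (2 * a / (a - 1)) ^ s * zetaR s :=
        mul_le_mul hX hz hzpos.le (by linarith [hfa])
      have hYpos : 0 ≤ 6 * (2 * a / (a - 1)) ^ s * zetaR s := by
        have hzq : 0 < zetaR s := lt_of_lt_of_le hzpos hz
        have := mul_pos hfa hzq
        linarith [this]
      exact mul_le_mul hY hLs p3.le hYpos
    calc 5 * L / (2 - a) ≤ 24 * s * L / (s - 1) := step1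
      _ ≤ 24 * (12:ℝ) ^ (s - 1) * L / (s - 1) := step2'
      _ = 6 * (4:ℝ) ^ s * (1 / (s - 1)) * (L * 3 ^ (s - 1)) := step3
      _ ≤ 6 * (2 * a / (a - 1)) ^ s * zetaR s * L ^ s := step4
  calc (coverSize γ : ℝ) ≤ (5 * L / (2 - a)) * (isoCoverSize M a γ : ℝ) := hfrac
    _ ≤ 6 * (2 * a / (a - 1)) ^ s * zetaR s * L ^ s * (isoCoverSize M a γ : ℝ) :=
        mul_le_mul_of_nonneg_right hconst (Nat.cast_nonneg _)
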